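/- For every k ≥ 3 and r ≥ 2, ssat_r(K_k) ≤ P_r(k-1), where P_r(k-1) is the least n admitting a K_k-free color pattern G_1,…,G_r on an n-vertex set V such that every r-coloring of V contains a strongly monochromatic K_{k-1}. -/

import Mathlib

/-- `S` is monochromatic of color `i` under the edge-coloring `c`. -/
def IsMonoOn {n r : ℕ} (c : Sym2 (Fin n) → Fin r) (i : Fin r) (S : Finset (Fin n)) : Prop :=
  ∀ x ∈ S, ∀ y ∈ S, x ≠ y → c s(x, y) = i

/-- `c'` extends the edge-coloring `c` by one new vertex. -/
def ColExtends {n r : ℕ} (c : Sym2 (Fin n) → Fin r) (c' : Sym2 (Fin (n + 1)) → Fin r) : Prop :=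
  ∀ x y : Fin n, c' s(x.castSucc, y.castSucc) = c s(x, y)

/-- An `r`-edge-coloring of `K_n` is `(r, K_k)`-semisaturated if every one-vertex extension
creates a new monochromatic `K_k` (one through the new vertex). -/
def Semisaturated (r k n : ℕ) (c : Sym2 (Fin n) → Fin r) : Prop :=
  ∀ c' : Sym2 (Fin (n + 1)) → Fin r, ColExtends c c' →
    ∃ i : Fin r, ∃ S : Finset (Fin (n + 1)), S.card = k ∧ Fin.last n ∈ S ∧ IsMonoOn c' i S

/-- The semisaturation Ramsey number `ssat_r(K_k)`. -/
noncomputable def ssat (r k : ℕ) : ℕ :=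
  sInf {n | ∃ c : Sym2 (Fin n) → Fin r, Semisaturated r k n c}

/-- `Ppat r k` is the least `n` admitting a `K_k`-free color pattern `G_1, …, G_r` on `n`
vertices such that every `r`-coloring of the vertices contains a strongly monochromatic
`K_{k-1}`. -/
noncomputable def Ppat (r k : ℕ) : ℕ :=
  sInf {n | ∃ G : Fin r → SimpleGraph (Fin n),
    (∀ i, (G i).CliqueFree k) ∧
    (∀ i j : Fin r, i ≠ j → ∀ x y : Fin n, ¬((G i).Adj x y ∧ (G j).Adj x y)) ∧
    (∀ χ : Fin n → Fin r, ∃ i : Fin r, ∃ S : Finset (Fin n),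
      (G i).IsNClique (k - 1) S ∧ ∀ v ∈ S, χ v = i)}

/-! ### Construction of a pattern

Vertices are lists over `Fin r` of length at most `r * B` (where `B = k - 2`).
In color `i`, a list `u` is joined to every list extending `u ++ [i]`, provided
`u` contains fewer than `B` occurrences of the letter `i`. -/

section PatternConstruction

variable (r B : ℕ)

/-- Vertex set of the pattern: lists over `Fin r` of bounded length. -/
def PatV : Type := {l : List (Fin r) // l.length ≤ r * B}

instance : DecidableEq (PatV r B) := by unfold PatV; infer_instance

noncomputable instance : Fintype (PatV r B) := by
  apply Fintype.ofInjective (β := Fin (r * B) → Option (Fin r))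
    (fun u => fun j => u.1[j.1]?)
  intro u v h
  apply Subtype.ext
  apply List.ext_getElem?
  intro n
  by_cases hn : n < r * B
  · exact congrFun h ⟨n, hn⟩
  · rw [List.getElem?_eq_none (u.2.trans (le_of_not_gt hn)),
      List.getElem?_eq_none (v.2.trans (le_of_not_gt hn))]

/-- One direction of adjacency: `w` extends `u ++ [i]` and `u` has few `i`s. -/
def PatHalf (i : Fin r) (u w : List (Fin r)) : Prop :=
  u ++ [i] <+: w ∧ u.count i < B

lemma PatHalf.length_lt {i : Fin r} {u w : List (Fin r)} (h : PatHalf r B i u w) :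
    u.length < w.length := by
  have := h.1.length_le
  simp at this
  omega

lemma PatHalf.count_lt {i : Fin r} {u w : List (Fin r)} (h : PatHalf r B i u w) :
    u.count i < w.count i := by
  have := h.1.sublist.count_le i
  simp [List.count_append] at this
  omega

/-- The pattern graph of color `i`. -/
def patG (i : Fin r) : SimpleGraph (PatV r B) where
  Adj u w := PatHalf r B i u.1 w.1 ∨ PatHalf r B i w.1 u.1
  symm := by constructor; intro u w h; exact h.symm
  loopless := by
    constructor; intro u h
    rcases h with h | h <;> exact absurd (PatHalf.length_lt r B h) (lt_irrefl _)

lemma patG_adj_of_half {i : Fin r} {u w : PatV r B} (h : PatHalf r B i u.1 w.1) :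
    (patG r B i).Adj u w := Or.inl h

lemma count_append_singleton (u : List (Fin r)) (i j : Fin r) :
    (u ++ [i]).count j = u.count j + if j = i then 1 else 0 := by
  simp [List.count_append, List.count_singleton', eq_comm]

/-- Cliques in the pattern graph have at most `B + 1` vertices. -/
lemma patG_cliqueFree (i : Fin r) : (patG r B i).CliqueFree (B + 2) := by
  intro S hS
  have hcount : ∀ x ∈ S, ∀ y ∈ S, x ≠ y → (patG r B i).Adj x y :=
    fun x hx y hy hxy => hS.1 hx hy hxy
  have hne : S.Nonempty := by
    rw [← Finset.card_pos, hS.2]; omega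
  obtain ⟨z, hz, hmax⟩ := S.exists_max_image (fun u => u.1.count i) hne
  -- every other vertex x of S satisfies `PatHalf i x z`, hence `x.count i < B`
  have hhalf : ∀ x ∈ S, x ≠ z → PatHalf r B i x.1 z.1 := by
    intro x hx hxz
    rcases hcount x hx z hz hxz with h | h
    · exact h
    · exact absurd (hmax x hx) (not_le.mpr (PatHalf.count_lt r B h))
  -- counts are injective on S
  have hinj : Set.InjOn (fun u : PatV r B => u.1.count i) (S.erase z) := by
    intro x hx y hy hxy
    by_contra hne'
    rcases hcount x (Finset.mem_of_mem_erase hx) y (Finset.mem_of_mem_erase hy) hne' with h | h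
    · exact absurd hxy (Nat.ne_of_lt (PatHalf.count_lt r B h))
    · exact absurd hxy.symm (Nat.ne_of_lt (PatHalf.count_lt r B h))
  have hsub : ∀ x ∈ S.erase z, (fun u : PatV r B => u.1.count i) x ∈ Finset.range B := by
    intro x hx
    exact Finset.mem_range.mpr (hhalf x (Finset.mem_of_mem_erase hx)
      (Finset.ne_of_mem_erase hx)).2
  have hcard := Finset.card_le_card_of_injOn _ hsub hinj
  rw [Finset.card_erase_of_mem hz, hS.2, Finset.card_range] at hcard
  omega

/-- Graphs of distinct colors are edge-disjoint. -/
lemma patG_disjoint {i j : Fin r} (hij : i ≠ j) (x y : PatV r B) :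
    ¬((patG r B i).Adj x y ∧ (patG r B j).Adj x y) := by
  rintro ⟨hi, hj⟩
  have key : ∀ (u w : List (Fin r)), (u ++ [i]) <+: w → (u ++ [j]) <+: w → False := by
    intro u w h1 h2
    have : u ++ [i] = u ++ [j] := by
      apply (List.prefix_of_prefix_length_le h1 h2 (by simp)).eq_of_length
      simp
    simp at this
    exact hij this
  rcases hi with hi | hi <;> rcases hj with hj | hj
  · exact key _ _ hi.1 hj.1
  · exact absurd ((PatHalf.length_lt r B hj)) (not_lt.mpr (PatHalf.length_lt r B hi).le)
  · exact absurd ((PatHalf.length_lt r B hj)) (not_lt.mpr (PatHalf.length_lt r B hi).le)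
  · exact key _ _ hi.1 hj.1

lemma patV_length_eq_sum (hr : 0 < r) (l : List (Fin r)) : l.length = ∑ j, l.count j := by
  have := Multiset.sum_count_eq_card (s := Finset.univ) (m := (l : Multiset (Fin r))) (fun a _ => Finset.mem_univ a)
  simpa using this.symm

/-- Terminal step of the descent: the letter `χ u` already occurs `B` times in `u`. -/
lemma pat_terminal (χ : PatV r B → Fin r) (u : PatV r B) (i : Fin r)
    (C : Finset (PatV r B))
    (hi : χ u = i) (hcount : u.1.count i = B) (hcard : C.card = B)
    (hmem : ∀ p ∈ C, χ p = i ∧ p.1 ++ [i] <+: u.1)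
    (hclq : (patG r B i).IsClique C) :
    ∃ i' : Fin r, ∃ S : Finset (PatV r B),
      (patG r B i').IsNClique (B + 1) S ∧ ∀ v ∈ S, χ v = i' := by
  refine ⟨i, insert u C, ?_, ?_⟩
  · have hCn : (patG r B i).IsNClique B C := ⟨hclq, hcard⟩
    apply hCn.insert
    intro b hb
    apply (patG r B i).adj_symm
    apply patG_adj_of_half
    refine ⟨(hmem b hb).2, ?_⟩
    have := (hmem b hb).2.sublist.count_le i
    simp [List.count_append] at this
    omega
  · intro v hv
    rcases Finset.mem_insert.mp hv with h | h
    · rw [h, hi]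
    · exact (hmem v h).1

/-- The descent: following the vertex coloring along the tree of lists always reaches a
strongly monochromatic clique. -/
lemma pat_descent (hr : 0 < r) (χ : PatV r B → Fin r) :
    ∀ (fuel : ℕ) (u : PatV r B) (C : Fin r → Finset (PatV r B)),
      r * B ≤ u.1.length + fuel →
      (∀ j, u.1.count j ≤ B) →
      (∀ j, (C j).card = u.1.count j) →
      (∀ j, ∀ p ∈ C j, χ p = j ∧ p.1 ++ [j] <+: u.1) →
      (∀ j, (patG r B j).IsClique (C j)) →
      ∃ i : Fin r, ∃ S : Finset (PatV r B),
        (patG r B i).IsNClique (B + 1) S ∧ ∀ v ∈ S, χ v = i := by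
  intro fuel
  induction fuel with
  | zero =>
    intro u C hlen hcnt hcard hmem hclq
    have hall : ∀ j, u.1.count j = B := by
      by_contra hne
      push_neg at hne
      obtain ⟨j, hj⟩ := hne
      have hlt : u.1.count j < B := lt_of_le_of_ne (hcnt j) hj
      have hltsum : u.1.length < r * B := by
        rw [patV_length_eq_sum r hr]
        calc ∑ j', u.1.count j' < ∑ _j' : Fin r, B :=
              Finset.sum_lt_sum (fun j' _ => hcnt j') ⟨j, Finset.mem_univ _, hlt⟩
          _ = r * B := by simp [Finset.sum_const, mul_comm]
      omega
    exact pat_terminal r B χ u (χ u) (C (χ u)) rfl (hall _)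
      ((hcard _).trans (hall _)) (hmem _) (hclq _)
  | succ fuel ih =>
    intro u C hlen hcnt hcard hmem hclq
    by_cases hB : u.1.count (χ u) = B
    · exact pat_terminal r B χ u (χ u) (C (χ u)) rfl hB
        ((hcard _).trans hB) (hmem _) (hclq _)
    · set i := χ u with hidef
      have hBlt : u.1.count i < B := lt_of_le_of_ne (hcnt i) hB
      have hcnt' : ∀ j, (u.1 ++ [i]).count j ≤ B := by
        intro j
        rw [count_append_singleton]
        by_cases hji : j = i
        · subst hji; simp; omega
        · simp [hji]; exact hcnt j
      have hlen' : (u.1 ++ [i]).length ≤ r * B := by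
        rw [patV_length_eq_sum r hr]
        calc ∑ j, (u.1 ++ [i]).count j ≤ ∑ _j : Fin r, B :=
              Finset.sum_le_sum (fun j _ => hcnt' j)
          _ = r * B := by simp [Finset.sum_const, mul_comm]
      set u' : PatV r B := ⟨u.1 ++ [i], hlen'⟩ with hu'def
      have huC : u ∉ C i := by
        intro hu
        have := (hmem i u hu).2.length_le
        simp at this
      set C' := Function.update C i (insert u (C i)) with hC'def
      have hprefixC : ∀ j, ∀ p ∈ C j, p.1 ++ [j] <+: u'.1 := by
        intro j p hp
        exact (hmem j p hp).2.trans (List.prefix_append _ _)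
      apply ih u' C'
      · have h2 : u'.1.length = u.1.length + 1 := by simp [hu'def]
        omega
      · exact hcnt'
      · intro j
        by_cases hji : j = i
        · subst hji
          rw [hC'def, Function.update_self, Finset.card_insert_of_notMem huC, hcard,
            count_append_singleton]
          simp
        · rw [hC'def, Function.update_of_ne hji, hcard, count_append_singleton]
          simp [hji]
      · intro j p hp
        by_cases hji : j = i
        · subst hji
          rw [hC'def, Function.update_self] at hp
          rcases Finset.mem_insert.mp hp with h | h
          · subst h
            exact ⟨hidef.symm, by rw [hu'def]⟩
          · exact ⟨(hmem _ p h).1, hprefixC _ p h⟩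
        · rw [hC'def, Function.update_of_ne hji] at hp
          exact ⟨(hmem j p hp).1, hprefixC j p hp⟩
      · intro j
        by_cases hji : j = i
        · subst hji
          rw [hC'def, Function.update_self]
          rw [Finset.coe_insert]
          apply (hclq i).insert
          intro b hb _
          apply (patG r B i).adj_symm
          apply patG_adj_of_half
          refine ⟨(hmem i b hb).2, ?_⟩
          have := (hmem i b hb).2.sublist.count_le i
          simp [List.count_append] at this
          omega
        · rw [hC'def, Function.update_of_ne hji]
          exact hclq j

end PatternConstruction

/-- Existence of a pattern: the set defining `Ppat` is nonempty. -/
lemma pattern_exists (k r : ℕ) (hk : 3 ≤ k) (hr : 2 ≤ r) :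
    ∃ n, ∃ G : Fin r → SimpleGraph (Fin n),
      (∀ i, (G i).CliqueFree k) ∧
      (∀ i j : Fin r, i ≠ j → ∀ x y : Fin n, ¬((G i).Adj x y ∧ (G j).Adj x y)) ∧
      (∀ χ : Fin n → Fin r, ∃ i : Fin r, ∃ S : Finset (Fin n),
        (G i).IsNClique (k - 1) S ∧ ∀ v ∈ S, χ v = i) := by
  set B := k - 2 with hBdef
  have hk2 : B + 2 = k := by omega
  have hk1 : B + 1 = k - 1 := by omega
  set V := PatV r B with hV
  set n := Fintype.card V with hn
  set e : V ≃ Fin n := Fintype.equivFin V with he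
  refine ⟨n, fun i => SimpleGraph.comap e.symm (patG r B i), ?_, ?_, ?_⟩
  · intro i S hS
    apply patG_cliqueFree r B i (S.map e.symm.toEmbedding)
    constructor
    · intro x hx y hy hxy
      simp only [Finset.coe_map, Set.mem_image, Finset.mem_coe] at hx hy
      obtain ⟨a, ha, rfl⟩ := hx
      obtain ⟨b, hb, rfl⟩ := hy
      have hab : a ≠ b := fun h => hxy (by rw [h])
      exact hS.1 ha hb hab
    · rw [Finset.card_map, hS.2, hk2]
  · intro i j hij x y h
    exact patG_disjoint r B hij _ _ h
  · intro χ
    obtain ⟨i, S, hS, hcol⟩ := pat_descent r B (by omega) (χ ∘ e) (r * B)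
      ⟨[], by simp⟩ (fun _ => ∅) (by simp) (by simp) (by simp)
      (by simp) (by simp [SimpleGraph.IsClique])
    refine ⟨i, S.map e.toEmbedding, ?_, ?_⟩
    · constructor
      · intro x hx y hy hxy
        simp only [Finset.coe_map, Set.mem_image, Finset.mem_coe] at hx hy
        obtain ⟨a, ha, rfl⟩ := hx
        obtain ⟨b, hb, rfl⟩ := hy
        have hab : a ≠ b := fun h => hxy (by rw [h])
        have := hS.1 ha hb hab
        simpa [SimpleGraph.comap] using this
      · rw [Finset.card_map, hS.2, hk1]
    · intro v hv
      simp only [Finset.mem_map] at hv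
      obtain ⟨a, ha, rfl⟩ := hv
      exact hcol a ha

theorem stmt19 (k r : ℕ) (hk : 3 ≤ k) (hr : 2 ≤ r) : ssat r k ≤ Ppat r k := by
  classical
  have hne : {n | ∃ G : Fin r → SimpleGraph (Fin n),
      (∀ i, (G i).CliqueFree k) ∧
      (∀ i j : Fin r, i ≠ j → ∀ x y : Fin n, ¬((G i).Adj x y ∧ (G j).Adj x y)) ∧
      (∀ χ : Fin n → Fin r, ∃ i : Fin r, ∃ S : Finset (Fin n),
        (G i).IsNClique (k - 1) S ∧ ∀ v ∈ S, χ v = i)}.Nonempty := by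
    obtain ⟨n, G, h1, h2, h3⟩ := pattern_exists k r hk hr
    exact ⟨n, G, h1, h2, h3⟩
  have hmem : Ppat r k ∈ _ := Nat.sInf_mem hne
  set n := Ppat r k with hndef
  obtain ⟨G, hfree, hdisj, hguar⟩ := hmem
  apply Nat.sInf_le
  -- build the semisaturated edge coloring from the pattern
  let c : Sym2 (Fin n) → Fin r := fun e =>
    if h : ∃ i, e ∈ (G i).edgeSet then h.choose else ⟨0, by omega⟩
  have hc : ∀ (i : Fin r) (x y : Fin n), (G i).Adj x y → c s(x, y) = i := by
    intro i x y hxy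
    have hex : ∃ j, s(x, y) ∈ (G j).edgeSet := ⟨i, (SimpleGraph.mem_edgeSet _).mpr hxy⟩
    have hch : s(x, y) ∈ (G hex.choose).edgeSet := hex.choose_spec
    simp only [c, dif_pos hex]
    by_contra hnei
    exact hdisj _ _ hnei x y ⟨(SimpleGraph.mem_edgeSet _).mp hch, hxy⟩
  refine ⟨c, ?_⟩
  intro c' hext
  set χ : Fin n → Fin r := fun x => c' s(Fin.last n, x.castSucc) with hχ
  obtain ⟨i, S, hS, hcol⟩ := hguar χ
  refine ⟨i, insert (Fin.last n) (S.map Fin.castSuccEmb), ?_, Finset.mem_insert_self _ _, ?_⟩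
  · have hnm : Fin.last n ∉ S.map Fin.castSuccEmb := by
      simp only [Finset.mem_map]
      rintro ⟨a, _, ha⟩
      exact absurd ha (Fin.castSucc_lt_last a).ne
    rw [Finset.card_insert_of_notMem hnm, Finset.card_map, hS.2]
    omega
  · intro x hx y hy hxy
    rcases Finset.mem_insert.mp hx with hx' | hx' <;>
      rcases Finset.mem_insert.mp hy with hy' | hy'
    · exact absurd (hx'.trans hy'.symm) hxy
    · -- x = last, y = castSucc v
      obtain ⟨v, hv, rfl⟩ := Finset.mem_map.mp hy'
      subst hx'
      exact hcol v hv
    · -- x = castSucc u, y = last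
      obtain ⟨u, hu, rfl⟩ := Finset.mem_map.mp hx'
      subst hy'
      rw [Sym2.eq_swap]
      exact hcol u hu
    · obtain ⟨u, hu, rfl⟩ := Finset.mem_map.mp hx'
      obtain ⟨v, hv, rfl⟩ := Finset.mem_map.mp hy'
      have huv : u ≠ v := by
        intro h; exact hxy (by rw [h])
      have : (G i).Adj u v := hS.1 hu hv huv
      rw [show ((Fin.castSuccEmb : Fin n ↪ Fin (n+1)) u) = u.castSucc from rfl,
        show ((Fin.castSuccEmb : Fin n ↪ Fin (n+1)) v) = v.castSucc from rfl,
        hext u v]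
      exact hc i u v this
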